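/- For every positive integer k and every homogeneous polynomial p of degree k in two variables, ∬_{x²+y²≤1} Δp(x,y) dx dy = k(k+2) ∬_{x²+y²≤1} p(x,y) dx dy, where Δ is the Laplacian. -/

import Mathlib

open MvPolynomial MeasureTheory
open Real intervalIntegral

set_option linter.unusedVariables false


noncomputable def Ctrig (a b : ℕ) : ℝ := ∫ θ in (-π)..π, cos θ ^ a * sin θ ^ b

lemma ctrig_integrable (a b : ℕ) (u v : ℝ) :
    IntervalIntegrable (fun θ => cos θ ^ a * sin θ ^ b) volume u v :=
  (Continuous.mul (by continuity) (by continuity)).intervalIntegrable _ _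

lemma hasDeriv_cs (a b : ℕ) (x : ℝ) :
    HasDerivAt (fun θ => cos θ ^ (a+1) * sin θ ^ (b+1))
      ((b+1 : ℝ) * (cos x ^ (a+2) * sin x ^ b) - (a+1 : ℝ) * (cos x ^ a * sin x ^ (b+2))) x := by
  have h1 : HasDerivAt (fun θ : ℝ => cos θ ^ (a+1)) (-((a+1:ℝ) * cos x ^ a * sin x)) x := by
    simpa [mul_comm, mul_assoc, mul_left_comm] using
      ((Real.hasDerivAt_cos x).fun_pow (a+1))
  have h2 : HasDerivAt (fun θ : ℝ => sin θ ^ (b+1)) ((b+1:ℝ) * sin x ^ b * cos x) x := by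
    simpa using ((Real.hasDerivAt_sin x).fun_pow (b+1))
  have := h1.fun_mul h2
  refine this.congr_deriv ?_
  ring

lemma key_trig (a b : ℕ) :
    (b+1 : ℝ) * Ctrig (a+2) b - (a+1 : ℝ) * (∫ θ in (-π)..π, cos θ ^ a * sin θ ^ (b+2)) = 0 := by
  have h := integral_eq_sub_of_hasDerivAt (f := fun θ => cos θ ^ (a+1) * sin θ ^ (b+1))
    (f' := fun x => (b+1 : ℝ) * (cos x ^ (a+2) * sin x ^ b) - (a+1 : ℝ) * (cos x ^ a * sin x ^ (b+2)))
    (a := -π) (b := π) (fun x _ => hasDeriv_cs a b x)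
    (((ctrig_integrable (a+2) b (-π) π).const_mul _).sub ((ctrig_integrable a (b+2) (-π) π).const_mul _))
  rw [intervalIntegral.integral_sub ((ctrig_integrable (a+2) b (-π) π).const_mul _)
      ((ctrig_integrable a (b+2) (-π) π).const_mul _),
    intervalIntegral.integral_const_mul, intervalIntegral.integral_const_mul] at h
  simp [Ctrig, Real.sin_pi] at h ⊢
  linarith [h]

lemma sin_sq_split (a b : ℕ) :
    (∫ θ in (-π)..π, cos θ ^ a * sin θ ^ (b+2)) = Ctrig a b - Ctrig (a+2) b := by
  rw [Ctrig, Ctrig, ← intervalIntegral.integral_sub (ctrig_integrable a b _ _) (ctrig_integrable (a+2) b _ _)]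
  congr 1; ext θ
  have : sin θ ^ 2 = 1 - cos θ ^ 2 := by
    have := sin_sq_add_cos_sq θ; linarith
  rw [pow_add (sin θ) b 2, pow_add (cos θ) a 2, this]
  ring

lemma R1 (a b : ℕ) : ((a+b : ℕ) + 2 : ℝ) * Ctrig (a+2) b = (a+1 : ℝ) * Ctrig a b := by
  have h := key_trig a b
  rw [sin_sq_split a b] at h
  push_cast
  ring_nf
  ring_nf at h
  linarith

lemma R2 (a b : ℕ) : ((a+b : ℕ) + 2 : ℝ) * Ctrig a (b+2) = (b+1 : ℝ) * Ctrig a b := by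
  have h := key_trig a b
  have h2 := sin_sq_split a b
  rw [h2] at h
  -- Ctrig a (b+2) = Ctrig a b - Ctrig (a+2) b
  have h3 : Ctrig a (b+2) = Ctrig a b - Ctrig (a+2) b := by
    rw [Ctrig, sin_sq_split]
  rw [h3]
  push_cast
  ring_nf
  ring_nf at h
  linarith

lemma Z1 (b : ℕ) : Ctrig 1 b = 0 := by
  have h := integral_eq_sub_of_hasDerivAt (f := fun θ => sin θ ^ (b+1))
    (f' := fun x => (b+1 : ℝ) * (cos x ^ 1 * sin x ^ b)) (a := -π) (b := π)
    (fun x _ => by simpa [mul_comm, mul_assoc, mul_left_comm, pow_one] using (Real.hasDerivAt_sin x).fun_pow (b+1))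
    ((ctrig_integrable 1 b (-π) π).const_mul _)
  rw [intervalIntegral.integral_const_mul] at h
  simp [Real.sin_pi] at h
  have hb : (b:ℝ)+1 ≠ 0 := by positivity
  rcases h with h | h
  · exact absurd h hb
  · simpa [Ctrig] using h

lemma Z2 (a : ℕ) : Ctrig a 1 = 0 := by
  have h := integral_eq_sub_of_hasDerivAt (f := fun θ => -(cos θ ^ (a+1)))
    (f' := fun x => (a+1 : ℝ) * (cos x ^ a * sin x ^ 1)) (a := -π) (b := π)
    (fun x _ => by
      have := ((Real.hasDerivAt_cos x).fun_pow (a+1)).fun_neg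
      convert this using 1
      push_cast; ring)
    ((ctrig_integrable a 1 (-π) π).const_mul _)
  rw [intervalIntegral.integral_const_mul] at h
  simp [Real.cos_pi] at h
  have ha : (a:ℝ)+1 ≠ 0 := by positivity
  rcases h with h | h
  · exact absurd h ha
  · simpa [Ctrig] using h

noncomputable def Jdisk (a b : ℕ) : ℝ :=
  ∫ v in {v : Fin 2 → ℝ | (v 0) ^ 2 + (v 1) ^ 2 ≤ 1}, (v 0) ^ a * (v 1) ^ b

lemma disk_meas : MeasurableSet {z : ℝ × ℝ | z.1 ^ 2 + z.2 ^ 2 ≤ 1} := by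
  apply measurableSet_le <;> fun_prop

lemma Jdisk_eq (a b : ℕ) : Jdisk a b = (1 / ((a:ℝ) + b + 2)) * Ctrig a b := by
  have hpre : (MeasurableEquiv.finTwoArrow ⁻¹' {z : ℝ × ℝ | z.1 ^ 2 + z.2 ^ 2 ≤ 1}) =
      {v : Fin 2 → ℝ | (v 0) ^ 2 + (v 1) ^ 2 ≤ 1} := by
    ext v; simp [MeasurableEquiv.finTwoArrow]
  have step1 : Jdisk a b = ∫ z in {z : ℝ × ℝ | z.1 ^ 2 + z.2 ^ 2 ≤ 1}, z.1 ^ a * z.2 ^ b := by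
    rw [Jdisk, ← hpre,
      ← (volume_preserving_finTwoArrow ℝ).setIntegral_preimage_emb
        (MeasurableEquiv.finTwoArrow).measurableEmbedding
        (fun z : ℝ × ℝ => z.1 ^ a * z.2 ^ b) _]
    rfl
  rw [step1]
  set g : ℝ × ℝ → ℝ := fun z => z.1 ^ a * z.2 ^ b with hg
  set D := {z : ℝ × ℝ | z.1 ^ 2 + z.2 ^ 2 ≤ 1} with hD
  have step2 : (∫ p in polarCoord.target, p.1 • (D.indicator g) (polarCoord.symm p))
      = ∫ z in D, g z := by
    rw [integral_comp_polarCoord_symm (D.indicator g), MeasureTheory.integral_indicator disk_meas]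
  have hset : polarCoord.target ∩ (fun p => polarCoord.symm p) ⁻¹' D
      = Set.Ioc (0:ℝ) 1 ×ˢ Set.Ioo (-π) π := by
    ext p
    simp only [polarCoord_target, Set.mem_inter_iff, Set.mem_prod, Set.mem_preimage, hD,
      Set.mem_setOf_eq, Set.mem_Ioi, Set.mem_Ioc, Set.mem_Ioo, polarCoord_symm_apply,
      Complex.equivRealProd_symm_apply]
    constructor
    · rintro ⟨⟨h1, h2⟩, h3⟩
      refine ⟨⟨h1, ?_⟩, h2⟩
      have hx : (p.1 * Real.cos p.2) ^ 2 + (p.1 * Real.sin p.2) ^ 2 = p.1 ^ 2 := by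
        have h := Real.sin_sq_add_cos_sq p.2
        calc (p.1 * Real.cos p.2) ^ 2 + (p.1 * Real.sin p.2) ^ 2
            = p.1 ^ 2 * (Real.sin p.2 ^ 2 + Real.cos p.2 ^ 2) := by ring
          _ = p.1 ^ 2 := by rw [h, mul_one]
      nlinarith
    · rintro ⟨⟨h1, h2⟩, h3⟩
      refine ⟨⟨h1, h3⟩, ?_⟩
      have hx : (p.1 * Real.cos p.2) ^ 2 + (p.1 * Real.sin p.2) ^ 2 = p.1 ^ 2 := by
        have h := Real.sin_sq_add_cos_sq p.2
        calc (p.1 * Real.cos p.2) ^ 2 + (p.1 * Real.sin p.2) ^ 2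
            = p.1 ^ 2 * (Real.sin p.2 ^ 2 + Real.cos p.2 ^ 2) := by ring
          _ = p.1 ^ 2 := by rw [h, mul_one]
      nlinarith
  have step3 : (∫ p in polarCoord.target, p.1 • (D.indicator g) (polarCoord.symm p))
      = ∫ p in Set.Ioc (0:ℝ) 1 ×ˢ Set.Ioo (-π) π, p.1 ^ (a+b+1) * (Real.cos p.2 ^ a * Real.sin p.2 ^ b) := by
    have : ∀ p : ℝ × ℝ, p.1 • (D.indicator g) (polarCoord.symm p)
        = ((fun q => polarCoord.symm q) ⁻¹' D).indicator
            (fun p => p.1 ^ (a+b+1) * (Real.cos p.2 ^ a * Real.sin p.2 ^ b)) p := by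
      intro p
      by_cases hp : polarCoord.symm p ∈ D
      · rw [Set.indicator_of_mem hp, Set.indicator_of_mem (by exact hp)]
        simp only [hg, polarCoord_symm_apply, smul_eq_mul]
        ring
      · rw [Set.indicator_of_notMem hp, Set.indicator_of_notMem (by exact hp)]
        simp
    simp_rw [this]
    rw [setIntegral_indicator, hset]
    refine disk_meas.preimage ?_
    have : (fun q : ℝ × ℝ => (polarCoord.symm q : ℝ × ℝ))
        = fun q : ℝ × ℝ => (q.1 * Real.cos q.2, q.1 * Real.sin q.2) := by
      funext q; exact polarCoord_symm_apply q
    rw [this]; fun_prop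
  have step4 : (∫ p in Set.Ioc (0:ℝ) 1 ×ˢ Set.Ioo (-π) π,
        p.1 ^ (a+b+1) * (Real.cos p.2 ^ a * Real.sin p.2 ^ b))
      = (∫ r in Set.Ioc (0:ℝ) 1, r ^ (a+b+1)) * ∫ θ in Set.Ioo (-π) π, Real.cos θ ^ a * Real.sin θ ^ b := by
    rw [show (volume : MeasureTheory.Measure (ℝ×ℝ)) = MeasureTheory.Measure.prod volume volume from rfl]
    exact MeasureTheory.setIntegral_prod_mul (fun r : ℝ => r ^ (a+b+1))
      (fun θ : ℝ => Real.cos θ ^ a * Real.sin θ ^ b) _ _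
  have hr : (∫ r in Set.Ioc (0:ℝ) 1, r ^ (a+b+1)) = 1 / ((a:ℝ) + b + 2) := by
    rw [← intervalIntegral.integral_of_le (by norm_num : (0:ℝ) ≤ 1), integral_pow]
    push_cast; ring
  have hth : (∫ θ in Set.Ioo (-π) π, Real.cos θ ^ a * Real.sin θ ^ b) = Ctrig a b := by
    rw [← MeasureTheory.integral_Ioc_eq_integral_Ioo,
      ← intervalIntegral.integral_of_le (by linarith [Real.pi_pos] : -π ≤ π)]
    rfl
  rw [← step2, step3, step4, hr, hth]

lemma L1 (a b : ℕ) : ((a : ℝ) * ((a-1 : ℕ) : ℝ)) * Jdisk (a-2) b = (a:ℝ) * Ctrig a b := by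
  match a with
  | 0 => simp
  | 1 => simp [Z1]
  | (a+2) =>
    have hR := R1 a b
    rw [Jdisk_eq]
    have h2 : ((a:ℝ) + b + 2) ≠ 0 := by positivity
    have : ((a+2 : ℕ) : ℝ) * (((a+2)-1 : ℕ) : ℝ) = ((a:ℝ)+2) * ((a:ℝ)+1) := by push_cast; ring
    rw [show (a+2)-2 = a from rfl, this]
    push_cast at hR
    field_simp
    push_cast
    linear_combination (-((a:ℝ)+2)) * hR

lemma L2 (a b : ℕ) : ((b : ℝ) * ((b-1 : ℕ) : ℝ)) * Jdisk a (b-2) = (b:ℝ) * Ctrig a b := by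
  match b with
  | 0 => simp
  | 1 => simp [Z2]
  | (b+2) =>
    have hR := R2 a b
    rw [Jdisk_eq]
    have h2 : ((a:ℝ) + b + 2) ≠ 0 := by positivity
    have : ((b+2 : ℕ) : ℝ) * (((b+2)-1 : ℕ) : ℝ) = ((b:ℝ)+2) * ((b:ℝ)+1) := by push_cast; ring
    rw [show (b+2)-2 = b from rfl, this]
    push_cast at hR
    field_simp
    push_cast
    linear_combination (-((b:ℝ)+2)) * hR

lemma keyJ (a b : ℕ) :
    ((a : ℝ) * ((a-1 : ℕ) : ℝ)) * Jdisk (a-2) b + ((b : ℝ) * ((b-1 : ℕ) : ℝ)) * Jdisk a (b-2)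
      = ((a+b : ℕ) : ℝ) * (((a+b : ℕ) : ℝ) + 2) * Jdisk a b := by
  rw [L1, L2, Jdisk_eq]
  have h2 : ((a:ℝ) + b + 2) ≠ 0 := by positivity
  push_cast
  field_simp


def Sdisk : Set (Fin 2 → ℝ) := {v | (v 0) ^ 2 + (v 1) ^ 2 ≤ 1}

lemma compact_Sdisk : IsCompact Sdisk := by
  have hclosed : IsClosed Sdisk := by
    apply isClosed_le <;> fun_prop
  have hsub : Sdisk ⊆ Metric.closedBall 0 1 := by
    intro v hv
    simp only [Metric.mem_closedBall, dist_zero_right]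
    rw [pi_norm_le_iff_of_nonneg (by norm_num)]
    intro i
    have h0 : (v 0) ^ 2 ≤ 1 := by
      have := sq_nonneg (v 1); have := hv; simp only [Sdisk, Set.mem_setOf_eq] at this; nlinarith [sq_nonneg (v 1)]
    have h1 : (v 1) ^ 2 ≤ 1 := by
      have := hv; simp only [Sdisk, Set.mem_setOf_eq] at this; nlinarith [sq_nonneg (v 0)]
    fin_cases i
    · simpa using abs_le_one_iff_mul_self_le_one.2 (by nlinarith [h0])
    · simpa using abs_le_one_iff_mul_self_le_one.2 (by nlinarith [h1])
  exact (isCompact_closedBall 0 1).of_isClosed_subset hclosed hsub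

lemma integrableOn_eval (q : MvPolynomial (Fin 2) ℝ) :
    IntegrableOn (fun v => eval v q) Sdisk := by
  exact (MvPolynomial.continuous_eval (p := q)).continuousOn.integrableOn_compact compact_Sdisk

lemma eval_mono (m : Fin 2 →₀ ℕ) (c : ℝ) (v : Fin 2 → ℝ) :
    eval v (monomial m c) = c * ((v 0) ^ (m 0) * (v 1) ^ (m 1)) := by
  rw [eval_monomial, Finsupp.prod_fintype _ _ (fun i => pow_zero (v i)), Fin.prod_univ_two]

lemma pd2 (m : Fin 2 →₀ ℕ) (c : ℝ) (i : Fin 2) :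
    pderiv i (pderiv i (monomial m c)) =
      monomial (m - Finsupp.single i 1 - Finsupp.single i 1) (c * (m i) * ((m i - 1 : ℕ))) := by
  rw [pderiv_monomial, pderiv_monomial]
  congr 2
  simp [Finsupp.tsub_apply]

lemma int_pd2_0 (m : Fin 2 →₀ ℕ) (c : ℝ) :
    ∫ v in Sdisk, eval v (pderiv 0 (pderiv 0 (monomial m c)))
      = c * ((m 0 : ℝ) * ((m 0 - 1 : ℕ) : ℝ)) * Jdisk (m 0 - 2) (m 1) := by
  rw [pd2]
  have he : ∀ v : Fin 2 → ℝ, eval v (monomial (m - Finsupp.single 0 1 - Finsupp.single 0 1)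
      (c * (m 0) * ((m 0 - 1 : ℕ)))) = (c * ((m 0 : ℝ) * ((m 0 - 1 : ℕ) : ℝ)))
        * ((v 0) ^ (m 0 - 2) * (v 1) ^ (m 1)) := by
    intro v
    rw [eval_mono]
    have e0 : ((m - Finsupp.single 0 1 - Finsupp.single 0 1 : Fin 2 →₀ ℕ)) 0 = m 0 - 2 := by
      simp [Finsupp.tsub_apply]; omega
    have e1 : ((m - Finsupp.single 0 1 - Finsupp.single 0 1 : Fin 2 →₀ ℕ)) 1 = m 1 := by
      simp [Finsupp.tsub_apply, Finsupp.single_apply]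
    rw [e0, e1]; ring
  simp_rw [he]
  rw [MeasureTheory.integral_const_mul]
  rfl

lemma int_pd2_1 (m : Fin 2 →₀ ℕ) (c : ℝ) :
    ∫ v in Sdisk, eval v (pderiv 1 (pderiv 1 (monomial m c)))
      = c * ((m 1 : ℝ) * ((m 1 - 1 : ℕ) : ℝ)) * Jdisk (m 0) (m 1 - 2) := by
  rw [pd2]
  have he : ∀ v : Fin 2 → ℝ, eval v (monomial (m - Finsupp.single 1 1 - Finsupp.single 1 1)
      (c * (m 1) * ((m 1 - 1 : ℕ)))) = (c * ((m 1 : ℝ) * ((m 1 - 1 : ℕ) : ℝ)))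
        * ((v 0) ^ (m 0) * (v 1) ^ (m 1 - 2)) := by
    intro v
    rw [eval_mono]
    have e0 : ((m - Finsupp.single 1 1 - Finsupp.single 1 1 : Fin 2 →₀ ℕ)) 0 = m 0 := by
      simp [Finsupp.tsub_apply, Finsupp.single_apply]
    have e1 : ((m - Finsupp.single 1 1 - Finsupp.single 1 1 : Fin 2 →₀ ℕ)) 1 = m 1 - 2 := by
      simp [Finsupp.tsub_apply]; omega
    rw [e0, e1]; ring
  simp_rw [he]
  rw [MeasureTheory.integral_const_mul]
  rfl

lemma int_mono (m : Fin 2 →₀ ℕ) (c : ℝ) :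
    ∫ v in Sdisk, eval v (monomial m c) = c * Jdisk (m 0) (m 1) := by
  simp_rw [eval_mono]
  rw [MeasureTheory.integral_const_mul]
  rfl

lemma mono_case (m : Fin 2 →₀ ℕ) (c : ℝ) :
    ∫ v in Sdisk, eval v (pderiv 0 (pderiv 0 (monomial m c)) + pderiv 1 (pderiv 1 (monomial m c)))
      = ((m 0 + m 1 : ℕ) : ℝ) * (((m 0 + m 1 : ℕ) : ℝ) + 2)
        * ∫ v in Sdisk, eval v (monomial m c) := by
  have hsplit : ∫ v in Sdisk, eval v (pderiv 0 (pderiv 0 (monomial m c)) + pderiv 1 (pderiv 1 (monomial m c)))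
      = (∫ v in Sdisk, eval v (pderiv 0 (pderiv 0 (monomial m c))))
        + ∫ v in Sdisk, eval v (pderiv 1 (pderiv 1 (monomial m c))) := by
    simp_rw [map_add]
    exact MeasureTheory.integral_add (integrableOn_eval _) (integrableOn_eval _)
  rw [hsplit, int_pd2_0, int_pd2_1, int_mono]
  have := keyJ (m 0) (m 1)
  push_cast at this ⊢
  linear_combination c * this

theorem stmt_11 (k : ℕ) (hk : 1 ≤ k) (p : MvPolynomial (Fin 2) ℝ)
    (hp : p.IsHomogeneous k) :
    ∫ v in {v : Fin 2 → ℝ | (v 0) ^ 2 + (v 1) ^ 2 ≤ 1},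
        eval v (pderiv 0 (pderiv 0 p) + pderiv 1 (pderiv 1 p)) =
      (k : ℝ) * ((k : ℝ) + 2) *
        ∫ v in {v : Fin 2 → ℝ | (v 0) ^ 2 + (v 1) ^ 2 ≤ 1}, eval v p := by
  show (∫ v in Sdisk, eval v (pderiv 0 (pderiv 0 p) + pderiv 1 (pderiv 1 p)))
      = (k : ℝ) * ((k : ℝ) + 2) * ∫ v in Sdisk, eval v p
  have key : ∀ m ∈ p.support,
      (∫ v in Sdisk, eval v (pderiv 0 (pderiv 0 (monomial m (coeff m p)))
          + pderiv 1 (pderiv 1 (monomial m (coeff m p)))))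
        = (k:ℝ) * ((k:ℝ)+2) * ∫ v in Sdisk, eval v (monomial m (coeff m p)) := by
    intro m hm
    have hdeg : m 0 + m 1 = k := by
      have h := hp (mem_support_iff.mp hm)
      rw [← h]
      simp [Finsupp.weight, Finsupp.linearCombination, Finsupp.sum_fintype,
        Fin.sum_univ_two]
    rw [mono_case, hdeg]
  have hL : pderiv 0 (pderiv 0 p) + pderiv 1 (pderiv 1 p)
      = ∑ m ∈ p.support, (pderiv 0 (pderiv 0 (monomial m (coeff m p)))
          + pderiv 1 (pderiv 1 (monomial m (coeff m p)))) := by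
    conv_lhs => rw [← support_sum_monomial_coeff p]
    rw [map_sum, map_sum, map_sum, map_sum, ← Finset.sum_add_distrib]
  rw [hL]
  simp only [map_sum (eval _)]
  rw [MeasureTheory.integral_finset_sum _ (fun m _ => by
    simpa [IntegrableOn] using integrableOn_eval (pderiv 0 (pderiv 0 (monomial m (coeff m p)))
      + pderiv 1 (pderiv 1 (monomial m (coeff m p)))))]
  have hR : (∫ v in Sdisk, eval v p)
      = ∑ m ∈ p.support, ∫ v in Sdisk, eval v (monomial m (coeff m p)) := by
    conv_lhs => rw [← support_sum_monomial_coeff p]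
    simp only [map_sum (eval _)]
    exact MeasureTheory.integral_finset_sum _ (fun m _ => integrableOn_eval _)
  rw [hR, Finset.mul_sum]
  exact Finset.sum_congr rfl (fun m hm => key m hm)
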